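/- Fix d ≥ 1 and let v_1, v_2, … be independent random vectors with v_i uniformly distributed on {0, 2^{i-1}}^d, and let U be an independent uniform random point of [0,1]^d. Let C_n be the random cubic partition of ℝ^d into cubes of side 2^n shifted by U + ∑_{i=1}^n v_i. Then for any two fixed points x, y ∈ ℝ^d, almost surely there exists N such that for all n ≥ N, x and y lie in the same cube of C_n. -/

import Mathlib

open MeasureTheory ProbabilityTheory Filter
open scoped ENNReal

/-- The half-open cube of the cubic partition of level `n` with shift `t`,
indexed by `k ∈ ℤ^d`: the set `t + 2^n k + [0, 2^n)^d`. -/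
def dyadicCube (d : ℕ) (t : Fin d → ℝ) (n : ℕ) (k : Fin d → ℤ) : Set (Fin d → ℝ) :=
  {x | ∀ i, t i + 2 ^ n * (k i : ℝ) ≤ x i ∧ x i < t i + 2 ^ n * ((k i : ℝ) + 1)}

namespace Stmt7Aux

/-- The arithmetic progression `{a + c m : m ∈ ℤ}` is measurable. -/
lemma measurableSet_AP (u c : ℝ) : MeasurableSet {t : ℝ | ∃ m : ℤ, t = u + c * m} := by
  have h : {t : ℝ | ∃ m : ℤ, t = u + c * m} = Set.range (fun m : ℤ => u + c * (m : ℝ)) := by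
    ext t; simp [Set.mem_range, eq_comm]
  rw [h]
  exact (Set.countable_range _).measurableSet

/-- Deterministic covering: if the level-`n` floors of `x` and `y` shifted by `u + k` differ
(`k` an integer), then `k` belongs to an arithmetic progression based at some integer
`z ∈ (x - u, y - u]`. -/
lemma slice_cover (x y u : ℝ) (hxy : x ≤ y) (n : ℕ) (k : ℤ)
    (hne : ⌊(x - (u + (k : ℝ))) / 2 ^ n⌋ ≠ ⌊(y - (u + (k : ℝ))) / 2 ^ n⌋) :
    ∃ z ∈ Finset.Icc (⌊x - u⌋ + 1) ⌊y - u⌋, ∃ m : ℤ, (k : ℝ) = (z : ℝ) + 2 ^ n * (m : ℝ) := by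
  have h2 : (0:ℝ) < 2 ^ n := by positivity
  set a := (x - (u + (k : ℝ))) / 2 ^ n with ha
  set b := (y - (u + (k : ℝ))) / 2 ^ n with hb
  have hab : a ≤ b := by
    rw [ha, hb]
    gcongr
  have hlt : ⌊a⌋ < ⌊b⌋ := lt_of_le_of_ne (Int.floor_le_floor hab) hne
  refine ⟨k + 2 ^ n * ⌊b⌋, ?_, ⟨-⌊b⌋, by push_cast; ring⟩⟩
  rw [Finset.mem_Icc]
  constructor
  · rw [Int.add_one_le_iff, Int.floor_lt]
    have ham : a < (⌊b⌋ : ℝ) := by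
      have h1 : a < (⌊a⌋ : ℝ) + 1 := Int.lt_floor_add_one a
      have h2' : (⌊a⌋ : ℝ) + 1 ≤ (⌊b⌋ : ℝ) := by exact_mod_cast hlt
      linarith
    have := (div_lt_iff₀ h2).mp ham
    push_cast
    linarith
  · rw [Int.le_floor]
    have hmb : (⌊b⌋ : ℝ) ≤ b := Int.floor_le b
    have := (le_div_iff₀ h2).mp hmb
    push_cast
    linarith

variable {Ω : Type*} [MeasurableSpace Ω] {P : Measure Ω} [IsProbabilityMeasure P]

lemma ae_of_measure_eq_one {S : Set Ω} (hS : MeasurableSet S) (h : P S = 1) :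
    ∀ᵐ ω ∂P, ω ∈ S := by
  rw [ae_iff]
  have : {ω | ¬ ω ∈ S} = Sᶜ := rfl
  rw [this, measure_compl hS (measure_ne_top _ _), h, measure_univ, tsub_self]

lemma measure_inter_of_one {S A : Set Ω} (hS : MeasurableSet S) (h : P S = 1) :
    P (A ∩ S) = P A := by
  refine le_antisymm (measure_mono Set.inter_subset_left) ?_
  have hSc : P Sᶜ = 0 := by
    rw [measure_compl hS (measure_ne_top _ _), h, measure_univ, tsub_self]
  calc P A ≤ P (A ∩ S) + P (A \ S) := measure_le_inter_add_diff _ _ _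
    _ ≤ P (A ∩ S) + P Sᶜ := by
        gcongr
        exact Set.diff_subset_compl A S
    _ = P (A ∩ S) := by rw [hSc, add_zero]

/-- Marginal distribution: each coordinate of a uniform random element of `{0,c}^d` is
uniform on `{0, c}`. -/
lemma marg {d : ℕ} (w : Ω → (Fin d → ℝ)) (hw : Measurable w) (c : ℝ) (hc : c ≠ 0)
    (hval : P {ω | ∀ k, w ω k = 0 ∨ w ω k = c} = 1)
    (hunif : ∀ f : Fin d → ℝ, (∀ k, f k = 0 ∨ f k = c) → P {ω | w ω = f} = (1 / 2) ^ d)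
    (j : Fin d) :
    P {ω | w ω j = 0} = 1 / 2 ∧ P {ω | w ω j = c} = 1 / 2 := by
  classical
  set G : Set Ω := {ω | ∀ k, w ω k = 0 ∨ w ω k = c} with hGdef
  have hGmeas : MeasurableSet G := by
    have hset : G = ⋂ k, (fun ω => w ω k) ⁻¹' {x | x = 0 ∨ x = c} := by
      ext ω; simp [hGdef, Set.mem_iInter]
    rw [hset]
    refine MeasurableSet.iInter fun k => ?_
    have hm : Measurable fun ω => w ω k := (measurable_pi_apply k).comp hw
    have : MeasurableSet {x : ℝ | x = 0 ∨ x = c} := by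
      have : {x : ℝ | x = 0 ∨ x = c} = {0, c} := by ext; simp
      rw [this]; exact (measurableSet_singleton c).insert 0
    exact hm this
  -- boolean parametrization
  set fb : (Fin d → Bool) → (Fin d → ℝ) := fun bb k => if bb k then c else 0 with hfbdef
  have hfbval : ∀ bb, ∀ k, fb bb k = 0 ∨ fb bb k = c := by
    intro bb k; by_cases h : bb k <;> simp [hfbdef, h]
  have hfbP : ∀ bb, P {ω | w ω = fb bb} = (1 / 2) ^ d := fun bb => hunif _ (hfbval bb)
  have hfb_inj : Function.Injective fb := by
    intro b1 b2 h
    funext k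
    have h3 := congrFun h k
    simp only [hfbdef] at h3
    by_cases h1 : b1 k <;> by_cases h2 : b2 k
    · rw [h1, h2]
    · rw [if_pos h1, if_neg h2] at h3; exact absurd h3 hc
    · rw [if_neg h1, if_pos h2] at h3; exact absurd h3.symm hc
    · rw [Bool.not_eq_true] at h1 h2; rw [h1, h2]
  have hmeas_fiber : ∀ bb, MeasurableSet {ω | w ω = fb bb} := by
    intro bb
    have : {ω | w ω = fb bb} = w ⁻¹' {fb bb} := rfl
    rw [this]; exact hw (measurableSet_singleton _)
  have hdisj : ∀ b1 b2, b1 ≠ b2 → Disjoint {ω | w ω = fb b1} {ω | w ω = fb b2} := by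
    intro b1 b2 hne
    rw [Set.disjoint_left]
    rintro ω h1 h2
    exact hne (hfb_inj (h1.symm.trans h2))
  -- key decomposition
  have hkey : ∀ e : Bool,
      {ω | w ω j = (if e then c else 0)} ∩ G
        = ⋃ bb ∈ Finset.univ.filter (fun bb : Fin d → Bool => bb j = e), {ω | w ω = fb bb} := by
    intro e
    ext ω
    simp only [Set.mem_inter_iff, Set.mem_setOf_eq, Set.mem_iUnion, Finset.mem_filter,
      Finset.mem_univ, true_and, exists_prop]
    constructor
    · rintro ⟨hj, hg⟩
      refine ⟨fun k => decide (w ω k ≠ 0), ?_, ?_⟩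
      · cases e with
        | false => simp at hj; simp [hj]
        | true => simp at hj; simp [hj, hc]
      · funext k
        rcases hg k with h | h
        · simp [hfbdef, h]
        · simp [hfbdef, h, hc]
    · rintro ⟨bb, hbj, hwb⟩
      constructor
      · rw [hwb]; simp [hfbdef, hbj]
      · intro k; rw [hwb]; exact hfbval bb k
  have hmeasure : ∀ e : Bool,
      P ({ω | w ω j = (if e then c else 0)} ∩ G)
        = (Finset.univ.filter (fun bb : Fin d → Bool => bb j = e)).card * (1 / 2 : ℝ≥0∞) ^ d := by
    intro e
    rw [hkey e, measure_biUnion_finset ?_ (fun bb _ => hmeas_fiber bb)]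
    · rw [Finset.sum_congr rfl (fun bb _ => hfbP bb), Finset.sum_const, nsmul_eq_mul]
    · intro b1 h1 b2 h2 hne
      exact hdisj b1 b2 hne
  have hcard_eq : (Finset.univ.filter (fun bb : Fin d → Bool => bb j = false)).card
      = (Finset.univ.filter (fun bb : Fin d → Bool => bb j = true)).card := by
    apply Finset.card_nbij' (fun bb => Function.update bb j true)
      (fun bb => Function.update bb j false)
    · intro bb hb
      rw [Finset.mem_coe, Finset.mem_filter]
      exact ⟨Finset.mem_univ _, Function.update_self _ _ _⟩
    · intro bb hb
      rw [Finset.mem_coe, Finset.mem_filter]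
      exact ⟨Finset.mem_univ _, Function.update_self _ _ _⟩
    · intro bb hb
      have hbj : bb j = false := (Finset.mem_filter.mp (Finset.mem_coe.mp hb)).2
      funext k
      beta_reduce
      by_cases hk : k = j
      · subst hk; rw [Function.update_self, hbj]
      · rw [Function.update_of_ne hk, Function.update_of_ne hk]
    · intro bb hb
      have hbj : bb j = true := (Finset.mem_filter.mp (Finset.mem_coe.mp hb)).2
      funext k
      beta_reduce
      by_cases hk : k = j
      · subst hk; rw [Function.update_self, hbj]
      · rw [Function.update_of_ne hk, Function.update_of_ne hk]
  set P0 := P ({ω | w ω j = 0} ∩ G) with hP0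
  set P1 := P ({ω | w ω j = c} ∩ G) with hP1
  have h01 : P0 = P1 := by
    have e0 := hmeasure false
    have e1 := hmeasure true
    rw [if_neg Bool.false_ne_true] at e0
    rw [if_pos rfl] at e1
    rw [hP0, hP1, e0, e1, hcard_eq]
  have hsum : P0 + P1 = 1 := by
    have hunion : ({ω | w ω j = 0} ∩ G) ∪ ({ω | w ω j = c} ∩ G) = G := by
      ext ω
      simp only [Set.mem_union, Set.mem_inter_iff, Set.mem_setOf_eq]
      constructor
      · rintro (⟨_, h⟩ | ⟨_, h⟩) <;> exact h
      · intro h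
        rcases h j with h0 | h1
        · exact Or.inl ⟨h0, h⟩
        · exact Or.inr ⟨h1, h⟩
    have hdisj01 : Disjoint ({ω | w ω j = 0} ∩ G) ({ω | w ω j = c} ∩ G) := by
      rw [Set.disjoint_left]
      rintro ω ⟨h0, _⟩ ⟨h1, _⟩
      exact hc (h0.symm.trans h1).symm
    have hm1 : MeasurableSet ({ω | w ω j = c} ∩ G) := by
      refine MeasurableSet.inter ?_ hGmeas
      have : {ω | w ω j = c} = (fun ω => w ω j) ⁻¹' {c} := rfl
      rw [this]; exact ((measurable_pi_apply j).comp hw) (measurableSet_singleton _)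
    rw [hP0, hP1, ← measure_union hdisj01 hm1, hunion, hval]
  have hhalf : P0 = 1 / 2 := by
    rw [h01] at hsum
    rw [ENNReal.eq_div_iff two_ne_zero ENNReal.ofNat_ne_top]
    rw [two_mul]
    rw [← h01] at hsum
    rw [h01]
    rw [← hsum, h01]
  constructor
  · rw [← measure_inter_of_one hGmeas hval, ← hP0, hhalf]
  · rw [← measure_inter_of_one hGmeas hval, ← hP1, ← h01, hhalf]

/-- The key induction: the sum `∑_{i=1}^n r i` lands in any given residue class mod `2^n`
with probability at most `2^{-n}`. -/
lemma atom_bound (r : ℕ → Ω → ℝ) (hmeas : ∀ i, Measurable (r i))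
    (hindep : iIndepFun r P)
    (hval : ∀ i, 1 ≤ i → P {ω | r i ω = 0 ∨ r i ω = 2 ^ (i - 1)} = 1)
    (h0 : ∀ i, 1 ≤ i → P {ω | r i ω = 0} = 1 / 2)
    (h1 : ∀ i, 1 ≤ i → P {ω | r i ω = 2 ^ (i - 1)} = 1 / 2) :
    ∀ n (s : ℝ),
      P {ω | ∃ m : ℤ, (∑ i ∈ Finset.Icc 1 n, r i ω) = s + 2 ^ n * m} ≤ (1 / 2) ^ n := by
  intro n
  induction n with
  | zero => intro s; simpa using prob_le_one
  | succ n ih =>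
    intro s
    have hSmeas : Measurable (∑ i ∈ Finset.Icc 1 n, r i) := by
      have : (∑ i ∈ Finset.Icc 1 n, r i) = fun ω => ∑ i ∈ Finset.Icc 1 n, r i ω := by
        funext ω; simp [Finset.sum_apply]
      rw [this]
      exact Finset.measurable_sum _ fun i _ => hmeas i
    have h2n : (0:ℝ) < 2 ^ n := by positivity
    -- the three relevant sets
    set T0 : Set ℝ := {t | ∃ m : ℤ, t = (s + 2 ^ (n+1) * m)} with hT0def
    set T1 : Set ℝ := {t | ∃ m : ℤ, t = (s - 2 ^ n + 2 ^ (n+1) * m)} with hT1def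
    set TB : Set ℝ := {t | ∃ m : ℤ, t = (s + 2 ^ n * m)} with hTBdef
    have hT0 : MeasurableSet T0 := measurableSet_AP s (2 ^ (n+1))
    have hT1 : MeasurableSet T1 := measurableSet_AP (s - 2 ^ n) (2 ^ (n+1))
    have hrv : P {ω | r (n+1) ω = 0 ∨ r (n+1) ω = 2 ^ n} = 1 := by
      have := hval (n+1) (by omega)
      simpa using this
    have hr0 : P {ω | r (n+1) ω = 0} = 1 / 2 := h0 (n+1) (by omega)
    have hr1 : P {ω | r (n+1) ω = 2 ^ n} = 1 / 2 := by
      have := h1 (n+1) (by omega)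
      simpa using this
    have hind : IndepFun (∑ i ∈ Finset.Icc 1 n, r i) (r (n+1)) P :=
      hindep.indepFun_finsetSum_of_notMem hmeas (by simp)
    -- inclusion into the union
    have hsub : {ω | ∃ m : ℤ, (∑ i ∈ Finset.Icc 1 (n+1), r i ω) = s + 2 ^ (n+1) * m}
        ⊆ ((∑ i ∈ Finset.Icc 1 n, r i) ⁻¹' T0 ∩ (r (n+1)) ⁻¹' {0})
          ∪ ((∑ i ∈ Finset.Icc 1 n, r i) ⁻¹' T1 ∩ (r (n+1)) ⁻¹' {(2:ℝ) ^ n})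
          ∪ {ω | r (n+1) ω = 0 ∨ r (n+1) ω = 2 ^ n}ᶜ := by
      rintro ω ⟨m, hm⟩
      rw [Finset.sum_Icc_succ_top (by omega : 1 ≤ n + 1)] at hm
      by_cases hr : r (n+1) ω = 0 ∨ r (n+1) ω = 2 ^ n
      · rcases hr with hr | hr
        · left; left
          refine ⟨?_, hr⟩
          simp only [Set.mem_preimage, Finset.sum_apply, hT0def, Set.mem_setOf_eq]
          exact ⟨m, by rw [hr] at hm; linarith⟩
        · left; right
          refine ⟨?_, hr⟩
          simp only [Set.mem_preimage, Finset.sum_apply, hT1def, Set.mem_setOf_eq]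
          exact ⟨m, by rw [hr] at hm; linarith⟩
      · right; exact hr
    have hcompl : P ({ω | r (n+1) ω = 0 ∨ r (n+1) ω = 2 ^ n}ᶜ) = 0 := by
      have hm : MeasurableSet {ω | r (n+1) ω = 0 ∨ r (n+1) ω = 2 ^ n} := by
        have : {ω | r (n+1) ω = 0 ∨ r (n+1) ω = 2 ^ n} = r (n+1) ⁻¹' {0, (2:ℝ)^n} := by
          ext ω; simp
        rw [this]
        exact hmeas (n+1) (by measurability)
      rw [measure_compl hm (measure_ne_top _ _), hrv, measure_univ, tsub_self]
    -- factorization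
    have hfac0 : P ((∑ i ∈ Finset.Icc 1 n, r i) ⁻¹' T0 ∩ (r (n+1)) ⁻¹' {0})
        = P ((∑ i ∈ Finset.Icc 1 n, r i) ⁻¹' T0) * (1 / 2) := by
      rw [hind.measure_inter_preimage_eq_mul T0 {0} hT0 (measurableSet_singleton _)]
      have h' : P (r (n+1) ⁻¹' {0}) = 1 / 2 := hr0
      rw [h']
    have hfac1 : P ((∑ i ∈ Finset.Icc 1 n, r i) ⁻¹' T1 ∩ (r (n+1)) ⁻¹' {(2:ℝ) ^ n})
        = P ((∑ i ∈ Finset.Icc 1 n, r i) ⁻¹' T1) * (1 / 2) := by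
      rw [hind.measure_inter_preimage_eq_mul T1 {(2:ℝ)^n} hT1 (measurableSet_singleton _)]
      have h' : P (r (n+1) ⁻¹' {(2:ℝ)^n}) = 1 / 2 := hr1
      rw [h']
    -- disjointness and inclusion into TB
    have hdisj : Disjoint ((∑ i ∈ Finset.Icc 1 n, r i) ⁻¹' T0)
        ((∑ i ∈ Finset.Icc 1 n, r i) ⁻¹' T1) := by
      rw [Set.disjoint_left]
      rintro ω ⟨m1, hm1⟩ ⟨m2, hm2⟩
      rw [hm1] at hm2
      have hkey : (2:ℝ) ^ n * (2 * (m1 : ℝ) - 2 * m2 + 1) = 0 := by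
        rw [pow_succ] at hm2; ring_nf at hm2 ⊢; nlinarith [hm2]
      have : (2 * (m1:ℝ) - 2 * m2 + 1) = 0 := by
        rcases mul_eq_zero.mp hkey with h | h
        · exact absurd h (ne_of_gt h2n)
        · exact h
      have : ((2 * m1 - 2 * m2 + 1 : ℤ) : ℝ) = 0 := by push_cast; linarith
      have : (2 * m1 - 2 * m2 + 1 : ℤ) = 0 := by exact_mod_cast this
      omega
    have hsubB : ((∑ i ∈ Finset.Icc 1 n, r i) ⁻¹' T0) ∪ ((∑ i ∈ Finset.Icc 1 n, r i) ⁻¹' T1)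
        ⊆ (∑ i ∈ Finset.Icc 1 n, r i) ⁻¹' TB := by
      rintro ω (⟨m, hm⟩ | ⟨m, hm⟩)
      · exact ⟨2 * m, by rw [hm]; push_cast; ring⟩
      · exact ⟨2 * m - 1, by rw [hm]; push_cast; ring⟩
    have hBbound : P ((∑ i ∈ Finset.Icc 1 n, r i) ⁻¹' TB) ≤ (1 / 2) ^ n := by
      have : (∑ i ∈ Finset.Icc 1 n, r i) ⁻¹' TB
          = {ω | ∃ m : ℤ, (∑ i ∈ Finset.Icc 1 n, r i ω) = s + 2 ^ n * m} := by
        ext ω; simp [hTBdef, Finset.sum_apply]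
      rw [this]
      exact ih s
    have hadd : P ((∑ i ∈ Finset.Icc 1 n, r i) ⁻¹' T0)
        + P ((∑ i ∈ Finset.Icc 1 n, r i) ⁻¹' T1) ≤ (1 / 2) ^ n := by
      rw [← measure_union hdisj (hSmeas hT1)]
      exact (measure_mono hsubB).trans hBbound
    calc P {ω | ∃ m : ℤ, (∑ i ∈ Finset.Icc 1 (n+1), r i ω) = s + 2 ^ (n+1) * m}
        ≤ P (((∑ i ∈ Finset.Icc 1 n, r i) ⁻¹' T0 ∩ (r (n+1)) ⁻¹' {0})
            ∪ ((∑ i ∈ Finset.Icc 1 n, r i) ⁻¹' T1 ∩ (r (n+1)) ⁻¹' {(2:ℝ) ^ n})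
            ∪ {ω | r (n+1) ω = 0 ∨ r (n+1) ω = 2 ^ n}ᶜ) := measure_mono hsub
      _ ≤ P (((∑ i ∈ Finset.Icc 1 n, r i) ⁻¹' T0 ∩ (r (n+1)) ⁻¹' {0})
            ∪ ((∑ i ∈ Finset.Icc 1 n, r i) ⁻¹' T1 ∩ (r (n+1)) ⁻¹' {(2:ℝ) ^ n}))
          + P ({ω | r (n+1) ω = 0 ∨ r (n+1) ω = 2 ^ n}ᶜ) := measure_union_le _ _
      _ = P (((∑ i ∈ Finset.Icc 1 n, r i) ⁻¹' T0 ∩ (r (n+1)) ⁻¹' {0})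
            ∪ ((∑ i ∈ Finset.Icc 1 n, r i) ⁻¹' T1 ∩ (r (n+1)) ⁻¹' {(2:ℝ) ^ n})) := by
          rw [hcompl, add_zero]
      _ ≤ P ((∑ i ∈ Finset.Icc 1 n, r i) ⁻¹' T0 ∩ (r (n+1)) ⁻¹' {0})
          + P ((∑ i ∈ Finset.Icc 1 n, r i) ⁻¹' T1 ∩ (r (n+1)) ⁻¹' {(2:ℝ) ^ n}) :=
          measure_union_le _ _
      _ = (P ((∑ i ∈ Finset.Icc 1 n, r i) ⁻¹' T0)
          + P ((∑ i ∈ Finset.Icc 1 n, r i) ⁻¹' T1)) * (1 / 2) := by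
          rw [hfac0, hfac1, add_mul]
      _ ≤ (1 / 2) ^ n * (1 / 2) := mul_le_mul_left hadd _
      _ = (1 / 2) ^ (n + 1) := (pow_succ _ _).symm

/-- Bound on the probability that two points `x ≤ y` are separated at level `n`. -/
lemma coord_bound {f g : Ω → ℝ} (hf : Measurable f) (hg : Measurable g)
    (hfg : IndepFun f g P) (n : ℕ)
    (hatom : ∀ s : ℝ, P {ω | ∃ m : ℤ, g ω = s + 2 ^ n * m} ≤ (1 / 2) ^ n)
    (hint : ∀ᵐ ω ∂P, ∃ k : ℤ, g ω = (k : ℝ)) (x y : ℝ) (hxy : x ≤ y) :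
    P {ω | ⌊(x - (f ω + g ω)) / 2 ^ n⌋ ≠ ⌊(y - (f ω + g ω)) / 2 ^ n⌋}
      ≤ ENNReal.ofReal (y - x + 1) * (1 / 2) ^ n := by
  haveI : IsProbabilityMeasure (P.map f) := Measure.isProbabilityMeasure_map hf.aemeasurable
  have hprod : P.map (fun ω => (f ω, g ω)) = (P.map f).prod (P.map g) :=
    (indepFun_iff_map_prod_eq_prod_map_map hf.aemeasurable hg.aemeasurable).mp hfg
  set D : Set (ℝ × ℝ) :=
    {p | ⌊(x - (p.1 + p.2)) / 2 ^ n⌋ ≠ ⌊(y - (p.1 + p.2)) / 2 ^ n⌋} with hDdef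
  have hmf1 : Measurable fun p : ℝ × ℝ => ⌊(x - (p.1 + p.2)) / 2 ^ n⌋ :=
    Int.measurable_floor.comp
      ((measurable_const.sub (measurable_fst.add measurable_snd)).div_const _)
  have hmf2 : Measurable fun p : ℝ × ℝ => ⌊(y - (p.1 + p.2)) / 2 ^ n⌋ :=
    Int.measurable_floor.comp
      ((measurable_const.sub (measurable_fst.add measurable_snd)).div_const _)
  have hD : MeasurableSet D := by
    have : D = {p : ℝ × ℝ |
        ⌊(x - (p.1 + p.2)) / 2 ^ n⌋ = ⌊(y - (p.1 + p.2)) / 2 ^ n⌋}ᶜ := by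
      ext p; simp [hDdef]
    rw [this]
    exact (measurableSet_eq_fun hmf1 hmf2).compl
  have hslice : ∀ u : ℝ, (P.map g) (Prod.mk u ⁻¹' D)
      ≤ ENNReal.ofReal (y - x + 1) * (1 / 2) ^ n := by
    intro u
    set Zc : Set ℝ := (Set.range (fun k : ℤ => (k : ℝ)))ᶜ with hZcdef
    have hνZ : (P.map g) Zc = 0 := by
      rw [Measure.map_apply hg ((Set.countable_range _).measurableSet.compl)]
      rw [← nonpos_iff_eq_zero]
      have : g ⁻¹' Zc ⊆ {ω | ¬ ∃ k : ℤ, g ω = (k : ℝ)} := by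
        intro ω hω
        simp only [hZcdef, Set.mem_preimage, Set.mem_compl_iff, Set.mem_range] at hω
        simp only [Set.mem_setOf_eq]
        rintro ⟨k, hk⟩
        exact hω ⟨k, hk.symm⟩
      calc P (g ⁻¹' Zc) ≤ P {ω | ¬ ∃ k : ℤ, g ω = (k : ℝ)} := measure_mono this
        _ = 0 := ae_iff.mp hint
    have hcover : Prod.mk u ⁻¹' D ⊆ Zc ∪
        ⋃ z ∈ Finset.Icc (⌊x - u⌋ + 1) ⌊y - u⌋, {t : ℝ | ∃ m : ℤ, t = (z : ℝ) + 2 ^ n * m} := by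
      intro t ht
      by_cases hk : ∃ k : ℤ, t = (k : ℝ)
      · right
        obtain ⟨k, rfl⟩ := hk
        obtain ⟨z, hz, m, hm⟩ := slice_cover x y u hxy n k ht
        exact Set.mem_biUnion hz ⟨m, hm⟩
      · left
        simp only [hZcdef, Set.mem_compl_iff, Set.mem_range]
        rintro ⟨k2, hk2⟩
        exact hk ⟨k2, hk2.symm⟩
    have hAP : ∀ z : ℤ, (P.map g) {t : ℝ | ∃ m : ℤ, t = (z : ℝ) + 2 ^ n * m}
        ≤ (1 / 2) ^ n := by
      intro z
      rw [Measure.map_apply hg (measurableSet_AP _ _)]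
      exact hatom ((z : ℝ))
    have hcardR : ((Finset.Icc (⌊x - u⌋ + 1) ⌊y - u⌋).card : ℝ) ≤ y - x + 1 := by
      rw [Int.card_Icc]
      have h1 : (⌊y - u⌋ : ℝ) ≤ y - u := Int.floor_le _
      have h2 : x - u - 1 < (⌊x - u⌋ : ℝ) := by
        have := Int.lt_floor_add_one (x - u); linarith
      rcases le_or_gt (⌊y - u⌋ + 1 - (⌊x - u⌋ + 1)) 0 with h | h
      · rw [Int.toNat_of_nonpos h]
        push_cast
        linarith
      · have heq : (((⌊y - u⌋ + 1 - (⌊x - u⌋ + 1)).toNat : ℕ) : ℝ)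
            = (⌊y - u⌋ : ℝ) - (⌊x - u⌋ : ℝ) := by
          have h3 : (((⌊y - u⌋ + 1 - (⌊x - u⌋ + 1)).toNat : ℕ) : ℤ)
              = ⌊y - u⌋ + 1 - (⌊x - u⌋ + 1) := Int.toNat_of_nonneg h.le
          have h4 := congrArg (fun z : ℤ => (z : ℝ)) h3
          push_cast at h4 ⊢
          linarith
        rw [heq]
        linarith
    calc (P.map g) (Prod.mk u ⁻¹' D)
        ≤ (P.map g) (Zc ∪
          ⋃ z ∈ Finset.Icc (⌊x - u⌋ + 1) ⌊y - u⌋,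
            {t : ℝ | ∃ m : ℤ, t = (z : ℝ) + 2 ^ n * m}) := measure_mono hcover
      _ ≤ (P.map g) Zc + (P.map g) (⋃ z ∈ Finset.Icc (⌊x - u⌋ + 1) ⌊y - u⌋,
            {t : ℝ | ∃ m : ℤ, t = (z : ℝ) + 2 ^ n * m}) := measure_union_le _ _
      _ = (P.map g) (⋃ z ∈ Finset.Icc (⌊x - u⌋ + 1) ⌊y - u⌋,
            {t : ℝ | ∃ m : ℤ, t = (z : ℝ) + 2 ^ n * m}) := by rw [hνZ, zero_add]
      _ ≤ ∑ z ∈ Finset.Icc (⌊x - u⌋ + 1) ⌊y - u⌋,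
            (P.map g) {t : ℝ | ∃ m : ℤ, t = (z : ℝ) + 2 ^ n * m} :=
          measure_biUnion_finset_le _ _
      _ ≤ ∑ _z ∈ Finset.Icc (⌊x - u⌋ + 1) ⌊y - u⌋, ((1:ℝ≥0∞) / 2) ^ n :=
          Finset.sum_le_sum fun z _ => hAP z
      _ = ((Finset.Icc (⌊x - u⌋ + 1) ⌊y - u⌋).card : ℝ≥0∞) * (1 / 2) ^ n := by
          rw [Finset.sum_const, nsmul_eq_mul]
      _ ≤ ENNReal.ofReal (y - x + 1) * (1 / 2) ^ n := by
          apply mul_le_mul_left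
          rw [← ENNReal.ofReal_natCast]
          exact ENNReal.ofReal_le_ofReal hcardR
  calc P {ω | ⌊(x - (f ω + g ω)) / 2 ^ n⌋ ≠ ⌊(y - (f ω + g ω)) / 2 ^ n⌋}
      = P ((fun ω => (f ω, g ω)) ⁻¹' D) := rfl
    _ = (P.map (fun ω => (f ω, g ω))) D := (Measure.map_apply (hf.prodMk hg) hD).symm
    _ = ((P.map f).prod (P.map g)) D := by rw [hprod]
    _ = ∫⁻ u, (P.map g) (Prod.mk u ⁻¹' D) ∂(P.map f) := Measure.prod_apply hD
    _ ≤ ∫⁻ _u, ENNReal.ofReal (y - x + 1) * (1 / 2) ^ n ∂(P.map f) :=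
        lintegral_mono fun u => hslice u
    _ = ENNReal.ofReal (y - x + 1) * (1 / 2) ^ n := by
        rw [lintegral_const, measure_univ, mul_one]

end Stmt7Aux

theorem stmt7 (d : ℕ) (hd : 1 ≤ d)
    {Ω : Type*} [MeasurableSpace Ω] (P : Measure Ω) [IsProbabilityMeasure P]
    (U : Ω → (Fin d → ℝ)) (v : ℕ → Ω → (Fin d → ℝ))
    (hUmeas : Measurable U) (hvmeas : ∀ i, Measurable (v i))
    -- `U` is uniform on the unit cube `[0,1]^d`
    (hU : P.map U = volume.restrict (Set.univ.pi fun _ => Set.Icc (0:ℝ) 1))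
    -- each `v i`, `i ≥ 1`, is uniform on `{0, 2^(i-1)}^d`
    (hvval : ∀ i, 1 ≤ i → P {ω | ∀ j, v i ω j = 0 ∨ v i ω j = 2 ^ (i - 1)} = 1)
    (hvunif : ∀ i, 1 ≤ i → ∀ f : Fin d → ℝ, (∀ j, f j = 0 ∨ f j = 2 ^ (i - 1)) →
      P {ω | v i ω = f} = (1 / 2) ^ d)
    -- `U, v₁, v₂, …` are independent
    (hindep : iIndepFun
      (fun i : ℕ => if i = 0 then U else v i) P) :
    ∀ x y : Fin d → ℝ, ∀ᵐ ω ∂P, ∃ N : ℕ, ∀ n, N ≤ n → ∃ k : Fin d → ℤ,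
      x ∈ dyadicCube d (U ω + ∑ i ∈ Finset.Icc 1 n, v i ω) n k ∧
      y ∈ dyadicCube d (U ω + ∑ i ∈ Finset.Icc 1 n, v i ω) n k := by
  classical
  intro x y
  open Stmt7Aux in
  -- coordinatewise min and max
  set a : Fin d → ℝ := fun j => min (x j) (y j) with hadef
  set b : Fin d → ℝ := fun j => max (x j) (y j) with hbdef
  set W : ℕ → Ω → (Fin d → ℝ) := fun i => if i = 0 then U else v i with hWdef
  have hWmeas : ∀ i, Measurable (W i) := by
    intro i
    by_cases h : i = 0 <;> simp [hWdef, h, hUmeas, hvmeas]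
  set rj : Fin d → ℕ → Ω → ℝ := fun j i ω => W i ω j with hrjdef
  have hrmeas : ∀ j i, Measurable (rj j i) := fun j i =>
    (measurable_pi_apply j).comp (hWmeas i)
  have hrindep : ∀ j, iIndepFun (rj j) P := by
    intro j
    exact hindep.comp (fun i p => p j) (fun i => measurable_pi_apply j)
  have hrval : ∀ j i, 1 ≤ i → P {ω | rj j i ω = 0 ∨ rj j i ω = 2 ^ (i - 1)} = 1 := by
    intro j i hi
    have hne : i ≠ 0 := by omega
    have hsub : {ω | ∀ j', v i ω j' = 0 ∨ v i ω j' = 2 ^ (i - 1)}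
        ⊆ {ω | rj j i ω = 0 ∨ rj j i ω = 2 ^ (i - 1)} := by
      intro ω hω
      simpa [hrjdef, hWdef, hne] using hω j
    refine le_antisymm prob_le_one ?_
    calc (1:ℝ≥0∞) = P {ω | ∀ j', v i ω j' = 0 ∨ v i ω j' = 2 ^ (i - 1)} := (hvval i hi).symm
      _ ≤ P {ω | rj j i ω = 0 ∨ rj j i ω = 2 ^ (i - 1)} := measure_mono hsub
  have hmarg : ∀ j i, 1 ≤ i →
      P {ω | rj j i ω = 0} = 1 / 2 ∧ P {ω | rj j i ω = 2 ^ (i - 1)} = 1 / 2 := by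
    intro j i hi
    have hne : i ≠ 0 := by omega
    have hc : (2:ℝ) ^ (i - 1) ≠ 0 := by positivity
    have := Stmt7Aux.marg (v i) (hvmeas i) ((2:ℝ) ^ (i - 1)) hc (hvval i hi)
      (fun f hf => hvunif i hi f hf) j
    have he0 : {ω | rj j i ω = 0} = {ω | v i ω j = 0} := by
      ext ω; simp [hrjdef, hWdef, hne]
    have he1 : {ω | rj j i ω = 2 ^ (i - 1)} = {ω | v i ω j = 2 ^ (i - 1)} := by
      ext ω; simp [hrjdef, hWdef, hne]
    rw [he0, he1]
    exact this
  -- the partial sums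
  set S : ℕ → Fin d → Ω → ℝ := fun n j ω => ∑ i ∈ Finset.Icc 1 n, v i ω j with hSdef
  have hSrj : ∀ n j ω, (∑ i ∈ Finset.Icc 1 n, rj j i ω) = S n j ω := by
    intro n j ω
    refine Finset.sum_congr rfl fun i hi => ?_
    have : i ≠ 0 := by
      have := (Finset.mem_Icc.mp hi).1; omega
    simp [hrjdef, hWdef, this]
  have hSmeas : ∀ n j, Measurable (S n j) := by
    intro n j
    apply Finset.measurable_sum
    intro i _
    exact (measurable_pi_apply j).comp (hvmeas i)
  have hatom : ∀ j n (s : ℝ), P {ω | ∃ m : ℤ, S n j ω = s + 2 ^ n * m} ≤ (1 / 2) ^ n := by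
    intro j n s
    have := Stmt7Aux.atom_bound (rj j) (hrmeas j) (hrindep j) (hrval j)
      (fun i hi => (hmarg j i hi).1) (fun i hi => (hmarg j i hi).2) n s
    have he : {ω | ∃ m : ℤ, (∑ i ∈ Finset.Icc 1 n, rj j i ω) = s + 2 ^ n * m}
        = {ω | ∃ m : ℤ, S n j ω = s + 2 ^ n * m} := by
      ext ω; simp only [Set.mem_setOf_eq, hSrj n j ω]
    rwa [he] at this
  have hint : ∀ n j, ∀ᵐ ω ∂P, ∃ k : ℤ, S n j ω = (k : ℝ) := by
    intro n j
    have hae : ∀ᵐ ω ∂P, ∀ i, 1 ≤ i → ∀ j', v i ω j' = 0 ∨ v i ω j' = 2 ^ (i - 1) := by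
      rw [ae_all_iff]
      intro i
      by_cases hi : 1 ≤ i
      · have hmeasS : MeasurableSet {ω | ∀ j', v i ω j' = 0 ∨ v i ω j' = 2 ^ (i - 1)} := by
          have hset : {ω | ∀ j', v i ω j' = 0 ∨ v i ω j' = 2 ^ (i - 1)}
              = ⋂ j', {ω | v i ω j' = 0 ∨ v i ω j' = 2 ^ (i - 1)} := by
            ext ω; simp [Set.mem_iInter]
          rw [hset]
          refine MeasurableSet.iInter fun j' => ?_
          have hm : Measurable fun ω => v i ω j' := (measurable_pi_apply j').comp (hvmeas i)
          have : {ω | v i ω j' = 0 ∨ v i ω j' = 2 ^ (i - 1)}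
              = (fun ω => v i ω j') ⁻¹' {0, (2:ℝ) ^ (i-1)} := by ext ω; simp
          exact this ▸ hm ((measurableSet_singleton _).insert 0)
        have := Stmt7Aux.ae_of_measure_eq_one (P := P) hmeasS (by
          have h2 : {ω | ∀ (j' : Fin d), v i ω j' = 0 ∨ v i ω j' = 2 ^ (i - 1)} =
            {ω | ∀ j', v i ω j' = 0 ∨ v i ω j' = 2 ^ (i - 1)} := rfl
          rw [h2]; exact hvval i hi)
        filter_upwards [this] with ω hω _ using hω
      · filter_upwards with ω h; omega
    filter_upwards [hae] with ω hω
    refine ⟨∑ i ∈ Finset.Icc 1 n, ⌊v i ω j⌋, ?_⟩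
    rw [hSdef]
    push_cast
    refine Finset.sum_congr rfl fun i hi => ?_
    have h1i : 1 ≤ i := (Finset.mem_Icc.mp hi).1
    rcases hω i h1i j with h | h
    · rw [h]; simp
    · rw [h]
      have : (2:ℝ) ^ (i - 1) = ((2 ^ (i - 1) : ℤ) : ℝ) := by push_cast; ring
      rw [this, Int.floor_intCast]
  have hpair : ∀ j n, IndepFun (fun ω => U ω j) (S n j) P := by
    intro j n
    have h1 : IndepFun (∑ i ∈ Finset.Icc 1 n, rj j i) (rj j 0) P :=
      (hrindep j).indepFun_finsetSum_of_notMem (hrmeas j) (by simp)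
    have h2 : (∑ i ∈ Finset.Icc 1 n, rj j i) = S n j := by
      funext ω
      rw [Finset.sum_apply]
      exact hSrj n j ω
    have h3 : rj j 0 = fun ω => U ω j := by
      funext ω; simp [hrjdef, hWdef]
    rw [h2, h3] at h1
    exact h1.symm
  -- the bad events
  set Ej : Fin d → ℕ → Set Ω := fun j n =>
    {ω | ⌊(a j - (U ω j + S n j ω)) / 2 ^ n⌋ ≠ ⌊(b j - (U ω j + S n j ω)) / 2 ^ n⌋}
    with hEjdef
  have hEj : ∀ j n, P (Ej j n) ≤ ENNReal.ofReal (b j - a j + 1) * (1 / 2) ^ n := by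
    intro j n
    exact Stmt7Aux.coord_bound ((measurable_pi_apply j).comp hUmeas) (hSmeas n j)
      (hpair j n) n (hatom j n) (hint n j) (a j) (b j) (min_le_max)
  set E : ℕ → Set Ω := fun n => ⋃ j, Ej j n with hEdef
  set C : ℝ≥0∞ := ∑ j, ENNReal.ofReal (b j - a j + 1) with hCdef
  have hCne : C ≠ ⊤ := by
    rw [hCdef]
    exact (ENNReal.sum_lt_top.mpr fun j _ => ENNReal.ofReal_lt_top).ne
  have hE : ∀ n, P (E n) ≤ C * (1 / 2) ^ n := by
    intro n
    calc P (E n) ≤ ∑ j, P (Ej j n) := measure_iUnion_fintype_le P (fun j => Ej j n)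
      _ ≤ ∑ j, ENNReal.ofReal (b j - a j + 1) * (1 / 2) ^ n :=
          Finset.sum_le_sum fun j _ => hEj j n
      _ = C * (1 / 2) ^ n := by rw [hCdef, Finset.sum_mul]
  have htsum : (∑' n, P (E n)) ≠ ⊤ := by
    have hle : (∑' n, P (E n)) ≤ C * 2 := by
      calc (∑' n, P (E n)) ≤ ∑' n, C * (1 / 2 : ℝ≥0∞) ^ n := ENNReal.tsum_le_tsum hE
        _ = C * ∑' n, (1 / 2 : ℝ≥0∞) ^ n := ENNReal.tsum_mul_left
        _ = C * 2 := by
            congr 1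
            rw [one_div, ENNReal.tsum_geometric, ENNReal.one_sub_inv_two, inv_inv]
    exact (hle.trans_lt (ENNReal.mul_lt_top hCne.lt_top (by norm_num))).ne
  filter_upwards [MeasureTheory.ae_eventually_notMem htsum] with ω hω
  rw [eventually_atTop] at hω
  obtain ⟨N, hN⟩ := hω
  refine ⟨N, fun n hn => ?_⟩
  have hnot : ∀ j, ⌊(a j - (U ω j + S n j ω)) / 2 ^ n⌋
      = ⌊(b j - (U ω j + S n j ω)) / 2 ^ n⌋ := by
    intro j
    have := hN n hn
    rw [hEdef] at this
    simp only [Set.mem_iUnion, not_exists] at this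
    have := this j
    rw [hEjdef] at this
    simpa using this
  set t : Fin d → ℝ := U ω + ∑ i ∈ Finset.Icc 1 n, v i ω with htdef
  have htj : ∀ j, t j = U ω j + S n j ω := by
    intro j
    simp [htdef, hSdef, Finset.sum_apply]
  have hfloor : ∀ j, ⌊(x j - t j) / 2 ^ n⌋ = ⌊(y j - t j) / 2 ^ n⌋ := by
    intro j
    rcases le_total (x j) (y j) with h | h
    · have ha' : a j = x j := min_eq_left h
      have hb' : b j = y j := max_eq_right h
      have := hnot j
      rw [ha', hb', ← htj j] at this
      exact this
    · have ha' : a j = y j := min_eq_right h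
      have hb' : b j = x j := max_eq_left h
      have := hnot j
      rw [ha', hb', ← htj j] at this
      exact this.symm
  have h2n : (0:ℝ) < 2 ^ n := by positivity
  refine ⟨fun j => ⌊(x j - t j) / 2 ^ n⌋, fun j => ?_, fun j => ?_⟩
  · show t j + 2 ^ n * ((⌊(x j - t j) / 2 ^ n⌋ : ℤ) : ℝ) ≤ x j ∧
      x j < t j + 2 ^ n * (((⌊(x j - t j) / 2 ^ n⌋ : ℤ) : ℝ) + 1)
    constructor
    · have h1 : (⌊(x j - t j) / 2 ^ n⌋ : ℝ) ≤ (x j - t j) / 2 ^ n := Int.floor_le _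
      have := (le_div_iff₀ h2n).mp h1
      linarith
    · have h1 : (x j - t j) / 2 ^ n < ⌊(x j - t j) / 2 ^ n⌋ + 1 := Int.lt_floor_add_one _
      have := (div_lt_iff₀ h2n).mp h1
      push_cast at this ⊢
      linarith
  · show t j + 2 ^ n * ((⌊(x j - t j) / 2 ^ n⌋ : ℤ) : ℝ) ≤ y j ∧
      y j < t j + 2 ^ n * (((⌊(x j - t j) / 2 ^ n⌋ : ℤ) : ℝ) + 1)
    rw [hfloor j]
    constructor
    · have h1 : (⌊(y j - t j) / 2 ^ n⌋ : ℝ) ≤ (y j - t j) / 2 ^ n := Int.floor_le _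
      have := (le_div_iff₀ h2n).mp h1
      linarith
    · have h1 : (y j - t j) / 2 ^ n < ⌊(y j - t j) / 2 ^ n⌋ + 1 := Int.lt_floor_add_one _
      have := (div_lt_iff₀ h2n).mp h1
      push_cast at this ⊢
      linarith
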